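/- Let G be a cubic graph and H the Petersen graph. If φ: E(G) → E(H) maps any three mutually adjacent edges of G to three mutually adjacent edges of H, then the preimage under φ of any perfect matching of H is a perfect matching of G. -/

import Mathlib

open Finset

def IsPerfectMatchingFinset {V : Type*} [Fintype V] [DecidableEq V]
    (G : SimpleGraph V) (M : Finset (Sym2 V)) : Prop :=
  (∀ e ∈ M, e ∈ G.edgeSet) ∧ ∀ v : V, (M.filter (fun e => v ∈ e)).card = 1

/-- The Petersen graph as the Kneser graph `K(5,2)`. -/
def petersen : SimpleGraph {s : Finset (Fin 5) // s.card = 2} where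
  Adj a b := Disjoint a.1 b.1
  symm := ⟨fun a b h => h.symm⟩
  loopless := ⟨fun a h => by
    have h2 := a.2
    simp only [disjoint_self] at h
    simp [h] at h2⟩

instance : DecidableRel petersen.Adj :=
  fun a b => inferInstanceAs (Decidable (Disjoint a.1 b.1))

/-- Three edges are mutually adjacent: pairwise distinct and pairwise sharing a
vertex. -/
def MutuallyAdjacent {W : Type*} (e f g : Sym2 W) : Prop :=
  e ≠ f ∧ e ≠ g ∧ f ≠ g ∧ (∃ v, v ∈ e ∧ v ∈ f) ∧ (∃ v, v ∈ e ∧ v ∈ g) ∧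
    ∃ v, v ∈ f ∧ v ∈ g

/-- A Petersen coloring of `G`: a map from edges of `G` to edges of the
Petersen graph sending mutually adjacent triples of edges to mutually adjacent
triples of edges. -/
def IsPetersenColoring {V : Type*} (G : SimpleGraph V)
    (φ : Sym2 V → Sym2 {s : Finset (Fin 5) // s.card = 2}) : Prop :=
  (∀ e ∈ G.edgeSet, φ e ∈ petersen.edgeSet) ∧
    ∀ e ∈ G.edgeSet, ∀ f ∈ G.edgeSet, ∀ g ∈ G.edgeSet,
      MutuallyAdjacent e f g → MutuallyAdjacent (φ e) (φ f) (φ g)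

private lemma petersen_tf : ∀ a b c, petersen.Adj a b → petersen.Adj a c →
    petersen.Adj b c → False := by decide

private lemma petersen_deg : ∀ v, petersen.degree v = 3 := by decide

/-- Three mutually adjacent edges of the (triangle-free) Petersen graph share a
common vertex. -/
private lemma common_vertex {E F K : Sym2 {s : Finset (Fin 5) // s.card = 2}}
    (hE : E ∈ petersen.edgeSet) (hF : F ∈ petersen.edgeSet)
    (hK : K ∈ petersen.edgeSet) (h : MutuallyAdjacent E F K) :
    ∃ w, w ∈ E ∧ w ∈ F ∧ w ∈ K := by
  obtain ⟨-, -, -, ⟨v, hvE, hvF⟩, ⟨u, huE, huK⟩, ⟨w, hwF, hwK⟩⟩ := h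
  by_cases hvK : v ∈ K
  · exact ⟨v, hvE, hvF, hvK⟩
  by_cases huF : u ∈ F
  · exact ⟨u, huE, huF, huK⟩
  by_cases hwE : w ∈ E
  · exact ⟨w, hwE, hwF, hwK⟩
  have hvu : v ≠ u := fun h => hvK (h ▸ huK)
  have hvw : v ≠ w := fun h => hwE (h ▸ hvE)
  have huw : u ≠ w := fun h => huF (h ▸ hwF)
  have hEeq : E = s(v, u) := (Sym2.mem_and_mem_iff hvu).mp ⟨hvE, huE⟩
  have hFeq : F = s(v, w) := (Sym2.mem_and_mem_iff hvw).mp ⟨hvF, hwF⟩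
  have hKeq : K = s(u, w) := (Sym2.mem_and_mem_iff huw).mp ⟨huK, hwK⟩
  rw [hEeq, SimpleGraph.mem_edgeSet] at hE
  rw [hFeq, SimpleGraph.mem_edgeSet] at hF
  rw [hKeq, SimpleGraph.mem_edgeSet] at hK
  exact absurd hK (fun hK => petersen_tf v u w hE hF hK)

/-- The preimage of a perfect matching of the Petersen graph under a Petersen
coloring of a cubic graph is a perfect matching. -/
theorem stmt14 {V : Type*} [Fintype V] [DecidableEq V]
    (G : SimpleGraph V) [DecidableRel G.Adj]
    (hcubic : ∀ v : V, G.degree v = 3)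
    (φ : Sym2 V → Sym2 {s : Finset (Fin 5) // s.card = 2})
    (hφ : IsPetersenColoring G φ) :
    ∀ M : Finset (Sym2 {s : Finset (Fin 5) // s.card = 2}),
      IsPerfectMatchingFinset petersen M →
        IsPerfectMatchingFinset G (G.edgeFinset.filter fun e => φ e ∈ M) := by
  intro M hM
  constructor
  · intro e he
    rw [Finset.mem_filter, SimpleGraph.mem_edgeFinset] at he
    exact he.1
  intro v
  -- rewrite the target set restricted to edges through `v`
  have hset : ((G.edgeFinset.filter fun e => φ e ∈ M).filter fun e => v ∈ e)
      = (G.incidenceFinset v).filter fun e => φ e ∈ M := by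
    rw [SimpleGraph.incidenceFinset_eq_filter, Finset.filter_filter,
      Finset.filter_filter]
    apply Finset.filter_congr
    intro e _
    simp [and_comm]
  rw [hset]
  -- `v` is incident to exactly three edges `a, b, c`
  have hcard : (G.incidenceFinset v).card = 3 := by
    rw [SimpleGraph.card_incidenceFinset_eq_degree]; exact hcubic v
  obtain ⟨a, b, c, hab, hac, hbc, hI⟩ := Finset.card_eq_three.mp hcard
  have hmem : ∀ e ∈ G.incidenceFinset v, e ∈ G.edgeSet ∧ v ∈ e := by
    intro e he
    rw [SimpleGraph.mem_incidenceFinset] at he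
    exact ⟨he.1, he.2⟩
  have ha := hmem a (hI ▸ by simp)
  have hb := hmem b (hI ▸ by simp)
  have hc := hmem c (hI ▸ by simp)
  have hMA : MutuallyAdjacent a b c :=
    ⟨hab, hac, hbc, ⟨v, ha.2, hb.2⟩, ⟨v, ha.2, hc.2⟩, ⟨v, hb.2, hc.2⟩⟩
  have hMA' := hφ.2 a ha.1 b hb.1 c hc.1 hMA
  have hφa := hφ.1 a ha.1
  have hφb := hφ.1 b hb.1
  have hφc := hφ.1 c hc.1
  obtain ⟨w, hwa, hwb, hwc⟩ := common_vertex hφa hφb hφc hMA'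
  obtain ⟨pab, pac, pbc, -⟩ := hMA'
  -- the unique matching edge `m` of `M` through `w`
  obtain ⟨m, hm⟩ := Finset.card_eq_one.mp (hM.2 w)
  have hmM : m ∈ M ∧ w ∈ m := by
    have : m ∈ M.filter (fun e => w ∈ e) := hm ▸ Finset.mem_singleton_self m
    simpa using this
  have hmuniq : ∀ e, e ∈ M → w ∈ e → e = m := by
    intro e heM hwe
    have : e ∈ M.filter (fun e => w ∈ e) := Finset.mem_filter.mpr ⟨heM, hwe⟩
    rw [hm] at this; simpa using this
  -- the edges of the Petersen graph through `w` are exactly `φ a, φ b, φ c`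
  have hsub : ({φ a, φ b, φ c} : Finset _) ⊆ petersen.incidenceFinset w := by
    intro e he
    simp only [Finset.mem_insert, Finset.mem_singleton] at he
    rw [SimpleGraph.mem_incidenceFinset]
    rcases he with rfl | rfl | rfl
    · exact ⟨hφa, hwa⟩
    · exact ⟨hφb, hwb⟩
    · exact ⟨hφc, hwc⟩
  have hcard3 : ({φ a, φ b, φ c} : Finset _).card = 3 := by
    rw [Finset.card_insert_of_notMem (by simp [pab, pac]),
      Finset.card_insert_of_notMem (by simp [pbc]), Finset.card_singleton]
  have hIw : petersen.incidenceFinset w = {φ a, φ b, φ c} :=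
    (Finset.eq_of_subset_of_card_le hsub (by
      rw [hcard3, SimpleGraph.card_incidenceFinset_eq_degree, petersen_deg])).symm
  have hmmem : m ∈ ({φ a, φ b, φ c} : Finset _) := by
    rw [← hIw, SimpleGraph.mem_incidenceFinset]
    exact ⟨hM.1 m hmM.1, hmM.2⟩
  rw [hI, Finset.card_eq_one]
  simp only [Finset.mem_insert, Finset.mem_singleton] at hmmem
  rcases hmmem with rfl | rfl | rfl
  · refine ⟨a, ?_⟩
    ext x
    simp only [Finset.mem_filter, Finset.mem_insert, Finset.mem_singleton]
    constructor
    · rintro ⟨rfl | rfl | rfl, hx⟩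
      · rfl
      · exact absurd (hmuniq _ hx hwb).symm pab
      · exact absurd (hmuniq _ hx hwc).symm pac
    · rintro rfl; exact ⟨Or.inl rfl, hmM.1⟩
  · refine ⟨b, ?_⟩
    ext x
    simp only [Finset.mem_filter, Finset.mem_insert, Finset.mem_singleton]
    constructor
    · rintro ⟨rfl | rfl | rfl, hx⟩
      · exact absurd (hmuniq _ hx hwa) pab
      · rfl
      · exact absurd (hmuniq _ hx hwc).symm pbc
    · rintro rfl; exact ⟨Or.inr (Or.inl rfl), hmM.1⟩
  · refine ⟨c, ?_⟩
    ext x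
    simp only [Finset.mem_filter, Finset.mem_insert, Finset.mem_singleton]
    constructor
    · rintro ⟨rfl | rfl | rfl, hx⟩
      · exact absurd (hmuniq _ hx hwa) pac
      · exact absurd (hmuniq _ hx hwb) pbc
      · rfl
    · rintro rfl; exact ⟨Or.inr (Or.inr rfl), hmM.1⟩
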